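/- arXiv:2310.14725 — 2 statements merged into one kernel-verified Lean document; each statement's English description precedes it below -/
import Mathlib

section
/- Let A = (α, μ, β) be a ℚ-weighted automaton of dimension n over a finite alphabet Σ such that every entry of α and of each matrix μ(σ), σ ∈ Σ, can be written as a fraction p/q with p, q integers, |p| ≤ B and 1 ≤ q ≤ B, for some integer B ≥ 2. Suppose that α·μ(w) ∈ ℤ^n for every word w ∈ Σ*. Then, setting k_0 := n(n − 1/2)·log₂ n + n²·log₂ B, there exists a finite set W ⊆ Σ* containing at most k_0 + n words, each of length at most k_0 + n, such that span_ℤ{α·μ(w) : w ∈ W} = span_ℤ{α·μ(w) : w ∈ Σ*}, i.e. the set {α·μ(w) : w ∈ W} generates the forward module of A. -/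
open Matrix Finset

namespace FWM

variable {n : ℕ}

/-! ### Gram determinants -/

def gram {m : ℕ} (v : Fin m → Fin n → ℚ) : Matrix (Fin m) (Fin m) ℚ :=
  Matrix.of fun i j => v i ⬝ᵥ v j

lemma gram_apply {m : ℕ} (v : Fin m → Fin n → ℚ) (i j : Fin m) :
    gram v i j = v i ⬝ᵥ v j := rfl

lemma gram_conj {m m' : ℕ} (A : Matrix (Fin m) (Fin m') ℚ) (w : Fin m' → Fin n → ℚ) :
    gram (fun i => ∑ j, A i j • w j) = A * gram w * Aᵀ := by
  ext i k
  simp only [gram_apply, Matrix.mul_apply, Matrix.transpose_apply, gram_apply]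
  simp only [dotProduct, Pi.smul_apply, smul_eq_mul, Finset.sum_apply, Finset.sum_mul,
    Finset.mul_sum]
  rw [Finset.sum_comm]
  refine Finset.sum_congr rfl fun j _ => ?_
  rw [Finset.sum_comm]
  refine Finset.sum_congr rfl fun l _ => ?_
  refine Finset.sum_congr rfl fun c _ => ?_
  ring

lemma sum_smul_dotProduct {m : ℕ} (t : Fin m → ℚ) (u : Fin m → Fin n → ℚ) (x : Fin n → ℚ) :
    ((∑ j, t j • u j) ⬝ᵥ x) = ∑ j, t j * (u j ⬝ᵥ x) := by
  simp only [dotProduct, Pi.smul_apply, smul_eq_mul, Finset.sum_apply, Finset.sum_mul,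
    Finset.mul_sum]
  rw [Finset.sum_comm]
  exact Finset.sum_congr rfl fun j _ => Finset.sum_congr rfl fun c _ => by ring

lemma dotProduct_sum_smul {m : ℕ} (t : Fin m → ℚ) (u : Fin m → Fin n → ℚ) (x : Fin n → ℚ) :
    (x ⬝ᵥ ∑ j, t j • u j) = ∑ j, t j * (x ⬝ᵥ u j) := by
  rw [dotProduct_comm, sum_smul_dotProduct]
  exact Finset.sum_congr rfl fun j _ => by rw [dotProduct_comm]

lemma dotProduct_self_nonneg (v : Fin n → ℚ) : 0 ≤ v ⬝ᵥ v :=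
  Finset.sum_nonneg fun i _ => mul_self_nonneg _

lemma dotProduct_self_pos {v : Fin n → ℚ} (hv : v ≠ 0) : 0 < v ⬝ᵥ v := by
  rcases (dotProduct_self_nonneg v).lt_or_eq with h | h
  · exact h
  · exact absurd (dotProduct_self_eq_zero.mp h.symm) hv

/-- Positivity and Hadamard's inequality for Gram determinants. -/
theorem gram_det_pos_le {m : ℕ} :
    ∀ v : Fin m → Fin n → ℚ, LinearIndependent ℚ v →
      0 < (gram v).det ∧ (gram v).det ≤ ∏ i, v i ⬝ᵥ v i := by
  induction m with
  | zero =>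
      intro v _
      rw [Matrix.det_fin_zero]
      simp
  | succ m ih =>
      intro v hv
      set u : Fin m → Fin n → ℚ := fun i => v i.succ with hu
      have hvc : Fin.cons (v 0) u = v := Fin.cons_self_tail v
      have hu_li : LinearIndependent ℚ u := hv.comp Fin.succ (Fin.succ_injective m)
      have h0 : v 0 ∉ Submodule.span ℚ (Set.range u) := by
        have h := hv
        rw [← hvc, linearIndependent_fin_cons] at h
        exact h.2
      obtain ⟨hupos, hule⟩ := ih u hu_li
      have hGunit : IsUnit (gram u).det := isUnit_iff_ne_zero.mpr (ne_of_gt hupos)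
      set t : Fin m → ℚ := (gram u)⁻¹ *ᵥ (fun j => v 0 ⬝ᵥ u j) with ht
      have hGt : gram u *ᵥ t = fun j => v 0 ⬝ᵥ u j := by
        rw [ht, Matrix.mulVec_mulVec, Matrix.mul_nonsing_inv _ hGunit, Matrix.one_mulVec]
      set p : Fin n → ℚ := ∑ j, t j • u j with hp
      set w : Fin n → ℚ := v 0 - p with hw
      have hortho : ∀ k, w ⬝ᵥ u k = 0 := by
        intro k
        have h1 : p ⬝ᵥ u k = v 0 ⬝ᵥ u k := by
          rw [hp, sum_smul_dotProduct]
          have := congrFun hGt k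
          rw [Matrix.mulVec, dotProduct] at this
          rw [← this]
          exact Finset.sum_congr rfl fun j _ => by
            rw [gram_apply, dotProduct_comm]; ring
        rw [hw, sub_dotProduct, h1, sub_self]
      have hwp : w ⬝ᵥ p = 0 := by
        rw [hp, dotProduct_sum_smul]
        exact Finset.sum_eq_zero fun j _ => by rw [hortho j, mul_zero]
      have hwne : w ≠ 0 := by
        intro hzero
        apply h0
        have : v 0 = p := by rw [hw] at hzero; linear_combination (norm := module) hzero
        rw [this, hp]
        exact Submodule.sum_mem _ fun j _ =>
          Submodule.smul_mem _ _ (Submodule.subset_span ⟨j, rfl⟩)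
      have hpyth : v 0 ⬝ᵥ v 0 = w ⬝ᵥ w + p ⬝ᵥ p := by
        have hv0 : v 0 = w + p := by rw [hw]; ring
        rw [hv0, add_dotProduct, dotProduct_add, dotProduct_add,
          hwp, dotProduct_comm p w, hwp]
        ring
      have hwle : w ⬝ᵥ w ≤ v 0 ⬝ᵥ v 0 := by
        rw [hpyth]; linarith [dotProduct_self_nonneg p]
      set A : Matrix (Fin (m + 1)) (Fin (m + 1)) ℚ :=
        Matrix.of (Fin.cons (Fin.cons 1 fun j => -t j)
          (fun i' j => if j = i'.succ then 1 else 0)) with hA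
      have hrow : (fun i => ∑ j, A i j • v j) = Fin.cons w u := by
        ext i c
        refine Fin.cases ?_ (fun i' => ?_) i
        · simp only [hA, Matrix.of_apply, Fin.cons_zero]
          rw [Fin.sum_univ_succ]
          simp only [Fin.cons_zero, Fin.cons_succ, one_smul, neg_smul]
          rw [hw, hp]
          simp [Finset.sum_apply, sub_eq_add_neg]
          rfl
        · simp only [hA, Matrix.of_apply, Fin.cons_succ]
          rw [Finset.sum_apply]
          rw [Finset.sum_eq_single i'.succ]
          · simp; rfl
          · intro b _ hb; simp [if_neg hb]
          · intro hmem; exact absurd (Finset.mem_univ _) hmem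
      have hdetA : A.det = 1 := by
        rw [Matrix.det_succ_column_zero, Fin.sum_univ_succ]
        have hz : ∀ i' : Fin m, A i'.succ 0 = 0 := by
          intro i'; simp [hA, (Fin.succ_ne_zero i').symm]
        rw [Finset.sum_eq_zero fun i' _ => by rw [hz i']; ring, add_zero]
        have hsub : A.submatrix (0 : Fin (m + 1)).succAbove Fin.succ = 1 := by
          ext i j
          simp only [Matrix.submatrix_apply, Fin.succAbove_zero, hA, Matrix.of_apply,
            Fin.cons_succ, Matrix.one_apply, Fin.succ_inj]
          by_cases h : j = i
          · simp [h]
          · simp [h, Ne.symm h]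
        rw [hsub, Matrix.det_one]
        simp [hA]
      have hgram : gram (Fin.cons w u) = A * gram v * Aᵀ := by rw [← hrow, gram_conj]
      have hdet2 : (gram (Fin.cons w u)).det = (gram v).det := by
        rw [hgram, Matrix.det_mul, Matrix.det_mul, Matrix.det_transpose, hdetA]
        ring
      have hblock : (gram (Fin.cons w u)).det = (w ⬝ᵥ w) * (gram u).det := by
        rw [Matrix.det_succ_row_zero, Fin.sum_univ_succ]
        have hz : ∀ j' : Fin m, gram (Fin.cons w u) 0 j'.succ = 0 := by
          intro j'
          rw [gram_apply, Fin.cons_zero, Fin.cons_succ]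
          exact hortho j'
        rw [Finset.sum_eq_zero fun j' _ => by rw [hz j']; ring]
        have hsub : (gram (Fin.cons w u)).submatrix Fin.succ (0 : Fin (m+1)).succAbove
            = gram u := by
          ext i j
          simp [Matrix.submatrix_apply, Fin.succAbove_zero, gram_apply, Fin.cons_succ]
        rw [hsub]
        simp [gram_apply]
      have hdetv : (gram v).det = (w ⬝ᵥ w) * (gram u).det := by rw [← hdet2, hblock]
      have hwpos : 0 < w ⬝ᵥ w := dotProduct_self_pos hwne
      constructor
      · rw [hdetv]; exact mul_pos hwpos hupos
      · rw [hdetv, Fin.prod_univ_succ]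
        exact mul_le_mul hwle hule (le_of_lt hupos) (dotProduct_self_nonneg _)

/-! ### Comparison of Gram determinants of nested lattices -/

lemma gram_compare {m : ℕ} (v v' : Fin m → Fin n → ℚ)
    (hle : Submodule.span ℤ (Set.range v) ≤ Submodule.span ℤ (Set.range v')) :
    ∃ d : ℤ, (gram v).det = (d : ℚ) ^ 2 * (gram v').det ∧
      (IsUnit d → Submodule.span ℤ (Set.range v') ≤ Submodule.span ℤ (Set.range v)) := by
  have hcoef : ∀ i, ∃ a : Fin m → ℤ, ∑ j, a j • v' j = v i := fun i =>
    (Submodule.mem_span_range_iff_exists_fun ℤ).mp (hle (Submodule.subset_span ⟨i, rfl⟩))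
  choose a ha using hcoef
  set A : Matrix (Fin m) (Fin m) ℤ := Matrix.of a with hA
  have hvA : v = fun i => ∑ j, ((A.map (Int.cast : ℤ → ℚ)) i j) • v' j := by
    funext i
    rw [← ha i]
    exact Finset.sum_congr rfl fun j _ => by
      rw [Matrix.map_apply, hA, Matrix.of_apply, Int.cast_smul_eq_zsmul]
  refine ⟨A.det, ?_, ?_⟩
  · have h1 : gram v = A.map (Int.cast : ℤ → ℚ) * gram v' * (A.map Int.cast)ᵀ := by
      rw [hvA, gram_conj]
    have h2 : (A.map (Int.cast : ℤ → ℚ)).det = ((A.det : ℤ) : ℚ) := by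
      exact (RingHom.map_det (Int.castRingHom ℚ) A).symm
    rw [h1, Matrix.det_mul, Matrix.det_mul, Matrix.det_transpose, h2]
    ring
  · intro hd
    have := A.invertibleOfIsUnitDet hd
    rw [Submodule.span_le]
    rintro _ ⟨k, rfl⟩
    have hk : v' k = ∑ i, (⅟A) k i • v i := by
      have h3 : ∑ i, (⅟A) k i • v i = ∑ i, (⅟A) k i • ∑ j, A i j • v' j := by
        exact Finset.sum_congr rfl fun i _ => congrArg ((⅟A) k i • ·) (ha i).symm
      rw [h3]
      simp only [Finset.smul_sum, smul_smul]
      rw [Finset.sum_comm]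
      have h4 : ∀ j, ∑ i, ((⅟A) k i * A i j) • v' j = ((⅟A * A) k j) • v' j := by
        intro j
        rw [Matrix.mul_apply, Finset.sum_smul]
      rw [Finset.sum_congr rfl fun j _ => h4 j]
      have hinv : ⅟A * A = 1 := invOf_mul_self A
      rw [hinv]
      rw [Finset.sum_eq_single k]
      · simp
      · intro b _ hb
        rw [Matrix.one_apply_ne' hb, zero_smul]
      · intro h; exact absurd (Finset.mem_univ _) h
    rw [SetLike.mem_coe, hk]
    exact Submodule.sum_mem _ fun i _ =>
      Submodule.smul_mem _ _ (Submodule.subset_span ⟨i, rfl⟩)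

/-! ### The integral lattice -/

def Lint (n : ℕ) : Submodule ℤ (Fin n → ℚ) where
  carrier := {v | ∀ i, ∃ z : ℤ, v i = (z : ℚ)}
  add_mem' := by
    rintro v w hv hw i
    obtain ⟨a, ha⟩ := hv i
    obtain ⟨b, hb⟩ := hw i
    exact ⟨a + b, by simp [ha, hb]⟩
  zero_mem' := fun i => ⟨0, by simp⟩
  smul_mem' := by
    rintro c v hv i
    obtain ⟨a, ha⟩ := hv i
    refine ⟨c * a, ?_⟩
    simp only [Pi.smul_apply, ha, zsmul_eq_mul]
    push_cast
    ring

lemma mem_Lint_iff {v : Fin n → ℚ} : v ∈ Lint n ↔ ∀ i, ∃ z : ℤ, v i = (z : ℚ) := Iff.rfl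

/-! ### `HasDet` -/

def HasDet (M : Submodule ℤ (Fin n → ℚ)) (c : ℚ) : Prop :=
  ∃ (m : ℕ) (v : Fin m → Fin n → ℚ), LinearIndependent ℚ v ∧
    Submodule.span ℤ (Set.range v) = M ∧ (gram v).det = c

lemma hasDet_pos {M : Submodule ℤ (Fin n → ℚ)} {c : ℚ} (h : HasDet M c) : 0 < c := by
  obtain ⟨m, v, hLI, -, rfl⟩ := h
  exact (gram_det_pos_le v hLI).1

lemma hasDet_int {M : Submodule ℤ (Fin n → ℚ)} {c : ℚ} (h : HasDet M c)
    (hM : M ≤ Lint n) : ∃ z : ℤ, c = (z : ℚ) := by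
  obtain ⟨m, v, hLI, hsp, rfl⟩ := h
  have hv : ∀ i, v i ∈ Lint n := fun i => hM (hsp ▸ Submodule.subset_span ⟨i, rfl⟩)
  have hx : ∀ i, ∀ k, ∃ z : ℤ, v i k = (z : ℚ) := fun i => hv i
  choose x hx using hx
  refine ⟨(Matrix.of fun i j => x i ⬝ᵥ x j).det, ?_⟩
  have hgr : gram v = (Matrix.of fun i j => x i ⬝ᵥ x j).map (Int.cast : ℤ → ℚ) := by
    ext i j
    simp only [gram_apply, Matrix.map_apply, Matrix.of_apply, dotProduct]
    push_cast
    exact Finset.sum_congr rfl fun k _ => by rw [hx i k, hx j k]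
  rw [hgr]
  exact (RingHom.map_det (Int.castRingHom ℚ) (Matrix.of fun i j => x i ⬝ᵥ x j)).symm

lemma exists_hasDet (M : Submodule ℤ (Fin n → ℚ)) (hfg : M.FG) : ∃ c : ℚ, HasDet M c := by
  haveI : Module.Finite ℤ M := Module.Finite.iff_fg.mpr hfg
  haveI : Module.Free ℤ M := Module.free_of_finite_type_torsion_free'
  let b := Module.Free.chooseBasis ℤ M
  let e := Fintype.equivFin (Module.Free.ChooseBasisIndex ℤ M)
  set v : Fin (Fintype.card (Module.Free.ChooseBasisIndex ℤ M)) → Fin n → ℚ :=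
    fun i => (b (e.symm i) : Fin n → ℚ) with hv
  have hLIZ : LinearIndependent ℤ v := by
    have h1 : LinearIndependent ℤ (fun i => b (e.symm i)) :=
      b.linearIndependent.comp e.symm e.symm.injective
    exact h1.map' M.subtype (Submodule.ker_subtype M)
  have hLI : LinearIndependent ℚ v := (LinearIndependent.iff_fractionRing ℤ ℚ).mp hLIZ
  have hsp : Submodule.span ℤ (Set.range v) = M := by
    have h1 : Set.range v = M.subtype '' Set.range (fun i => b (e.symm i)) := by
      rw [← Set.range_comp]
      rfl
    have h2 : Set.range (fun i => b (e.symm i)) = Set.range b :=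
      e.symm.surjective.range_comp b
    rw [h1, h2, ← Submodule.map_span, b.span_eq, Submodule.map_subtype_top]
  exact ⟨(gram v).det, _, v, hLI, hsp, rfl⟩

lemma hasDet_compare {M M' : Submodule ℤ (Fin n → ℚ)} {c c' : ℚ}
    (h : HasDet M c) (h' : HasDet M' c') (hle : M ≤ M')
    (hQ : Submodule.span ℚ (M : Set (Fin n → ℚ)) = Submodule.span ℚ (M' : Set (Fin n → ℚ))) :
    ∃ d : ℤ, c = (d : ℚ) ^ 2 * c' ∧ (IsUnit d → M = M') := by
  obtain ⟨m, v, hLI, hsp, rfl⟩ := h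
  obtain ⟨m', v', hLI', hsp', rfl⟩ := h'
  have hQ' : Submodule.span ℚ (Set.range v) = Submodule.span ℚ (Set.range v') := by
    rw [← hsp, ← hsp'] at hQ
    rwa [Submodule.span_span_of_tower, Submodule.span_span_of_tower] at hQ
  have hm : m = m' := by
    have e1 := finrank_span_eq_card hLI
    have e2 := finrank_span_eq_card hLI'
    rw [hQ'] at e1
    rw [e1] at e2
    simpa using e2
  subst hm
  obtain ⟨d, hd1, hd2⟩ := gram_compare v v' (by rw [hsp, hsp']; exact hle)
  refine ⟨d, hd1, fun hu => le_antisymm hle ?_⟩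
  rw [← hsp, ← hsp']
  exact hd2 hu

lemma hasDet_strict {M M' : Submodule ℤ (Fin n → ℚ)} {z z' : ℤ}
    (h : HasDet M (z : ℚ)) (h' : HasDet M' (z' : ℚ)) (hle : M ≤ M') (hne : M ≠ M')
    (hQ : Submodule.span ℚ (M : Set (Fin n → ℚ)) = Submodule.span ℚ (M' : Set (Fin n → ℚ))) :
    4 * z' ≤ z := by
  obtain ⟨d, hd1, hd2⟩ := hasDet_compare h h' hle hQ
  have hzpos : (0 : ℚ) < z := hasDet_pos h
  have hz'pos : (0 : ℚ) < z' := hasDet_pos h'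
  have hdne : d ≠ 0 := by
    rintro rfl
    rw [Int.cast_zero] at hd1
    simp at hd1
    rw [hd1] at hzpos
    exact lt_irrefl _ hzpos
  have hdnu : ¬IsUnit d := fun hu => hne (hd2 hu)
  have h4 : (4 : ℤ) ≤ d ^ 2 := by
    rw [Int.isUnit_iff] at hdnu
    push_neg at hdnu
    obtain ⟨h1, h2⟩ := hdnu
    rcases lt_or_gt_of_ne hdne with hlt | hgt
    · have : d ≤ -2 := by omega
      nlinarith
    · have : 2 ≤ d := by omega
      nlinarith
  have : ((4 * z' : ℤ) : ℚ) ≤ ((z : ℤ) : ℚ) := by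
    push_cast
    calc (4 : ℚ) * z' ≤ (d : ℚ) ^ 2 * z' := by
          have : ((4 : ℤ) : ℚ) ≤ ((d ^ 2 : ℤ) : ℚ) := by exact_mod_cast h4
          push_cast at this
          nlinarith
      _ = z := hd1.symm
  exact_mod_cast this


/-! ### Automaton vectors -/

section Automaton

variable {S : Type*} [Fintype S]

def gvec (α : Fin n → ℚ) (μ : S → Matrix (Fin n) (Fin n) ℚ) (w : List S) : Fin n → ℚ :=
  Matrix.vecMul α ((w.map μ).prod)

lemma gvec_nil (α : Fin n → ℚ) (μ : S → Matrix (Fin n) (Fin n) ℚ) : gvec α μ [] = α := by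
  simp [gvec]

lemma gvec_append (α : Fin n → ℚ) (μ : S → Matrix (Fin n) (Fin n) ℚ) (w : List S) (σ : S) :
    gvec α μ (w ++ [σ]) = Matrix.vecMul (gvec α μ w) (μ σ) := by
  simp only [gvec, List.map_append, List.prod_append, List.map_cons, List.map_nil,
    List.prod_cons, List.prod_nil, mul_one]
  rw [← Matrix.vecMul_vecMul]

variable (α : Fin n → ℚ) (μ : S → Matrix (Fin n) (Fin n) ℚ)

lemma closure_int (W : Set (List S))
    (h0 : gvec α μ [] ∈ Submodule.span ℤ (gvec α μ '' W))
    (hc : ∀ w ∈ W, ∀ σ : S, gvec α μ (w ++ [σ]) ∈ Submodule.span ℤ (gvec α μ '' W)) :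
    Submodule.span ℤ (Set.range (gvec α μ)) ≤ Submodule.span ℤ (gvec α μ '' W) := by
  rw [Submodule.span_le]
  rintro _ ⟨u, rfl⟩
  rw [SetLike.mem_coe]
  induction u using List.reverseRecOn with
  | nil => exact h0
  | append_singleton w σ ih =>
      have hmap : Submodule.map (((μ σ).vecMulLinear).restrictScalars ℤ)
          (Submodule.span ℤ (gvec α μ '' W)) ≤ Submodule.span ℤ (gvec α μ '' W) := by
        rw [Submodule.map_span_le]
        rintro _ ⟨u', hu', rfl⟩
        have he : (((μ σ).vecMulLinear).restrictScalars ℤ) (gvec α μ u')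
            = gvec α μ (u' ++ [σ]) := by rw [gvec_append]; rfl
        rw [he]
        exact hc u' hu' σ
      have hm := hmap (Submodule.mem_map_of_mem ih)
      rwa [show (((μ σ).vecMulLinear).restrictScalars ℤ) (gvec α μ w)
        = gvec α μ (w ++ [σ]) from by rw [gvec_append]; rfl] at hm

lemma closure_rat (W : Set (List S))
    (h0 : gvec α μ [] ∈ Submodule.span ℚ (gvec α μ '' W))
    (hc : ∀ w ∈ W, ∀ σ : S, gvec α μ (w ++ [σ]) ∈ Submodule.span ℚ (gvec α μ '' W)) :
    Submodule.span ℚ (Set.range (gvec α μ)) ≤ Submodule.span ℚ (gvec α μ '' W) := by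
  rw [Submodule.span_le]
  rintro _ ⟨u, rfl⟩
  rw [SetLike.mem_coe]
  induction u using List.reverseRecOn with
  | nil => exact h0
  | append_singleton w σ ih =>
      have hmap : Submodule.map ((μ σ).vecMulLinear)
          (Submodule.span ℚ (gvec α μ '' W)) ≤ Submodule.span ℚ (gvec α μ '' W) := by
        rw [Submodule.map_span_le]
        rintro _ ⟨u', hu', rfl⟩
        have he : ((μ σ).vecMulLinear) (gvec α μ u')
            = gvec α μ (u' ++ [σ]) := by rw [gvec_append]; rfl
        rw [he]
        exact hc u' hu' σ
      have hm := hmap (Submodule.mem_map_of_mem ih)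
      rwa [show ((μ σ).vecMulLinear) (gvec α μ w)
        = gvec α μ (w ++ [σ]) from by rw [gvec_append]; rfl] at hm

lemma full_by_short (hα : α ≠ 0) :
    Submodule.span ℚ (gvec α μ '' {w : List S | w.length ≤ n - 1})
      = Submodule.span ℚ (Set.range (gvec α μ)) := by
  have hn1 : 1 ≤ n := by
    rcases Nat.eq_zero_or_pos n with h | h
    · exfalso; apply hα; subst h; funext i; exact i.elim0
    · exact h
  have key : ∀ L : ℕ,
      Submodule.span ℚ (gvec α μ '' {w : List S | w.length ≤ L})
        = Submodule.span ℚ (Set.range (gvec α μ))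
      ∨ L + 1 ≤ Module.finrank ℚ
          (Submodule.span ℚ (gvec α μ '' {w : List S | w.length ≤ L})) := by
    intro L
    induction L with
    | zero =>
        right
        have hset : {w : List S | w.length ≤ 0} = {([] : List S)} := by
          ext w; simp [List.length_eq_zero_iff]
        rw [hset, Set.image_singleton, gvec_nil]
        exact le_of_eq (finrank_span_singleton hα).symm
    | succ L ihL =>
        have hmono : Submodule.span ℚ (gvec α μ '' {w : List S | w.length ≤ L})
            ≤ Submodule.span ℚ (gvec α μ '' {w : List S | w.length ≤ L + 1}) :=
          Submodule.span_mono (Set.image_mono (fun w hw => le_trans hw (Nat.le_succ L)))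
        rcases ihL with h | h
        · left
          refine le_antisymm (Submodule.span_mono (Set.image_subset_range _ _)) ?_
          rw [← h]; exact hmono
        · by_cases heq : Submodule.span ℚ (gvec α μ '' {w : List S | w.length ≤ L + 1})
              = Submodule.span ℚ (gvec α μ '' {w : List S | w.length ≤ L})
          · left
            have hcl := closure_rat α μ {w : List S | w.length ≤ L}
              (Submodule.subset_span (Set.mem_image_of_mem _ (by simp)))
              (by
                intro w hw σ
                rw [← heq]
                refine Submodule.subset_span (Set.mem_image_of_mem _ ?_)
                simp only [Set.mem_setOf_eq, List.length_append, List.length_cons,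
                  List.length_nil]
                simp only [Set.mem_setOf_eq] at hw
                omega)
            have hL : Submodule.span ℚ (gvec α μ '' {w : List S | w.length ≤ L})
                = Submodule.span ℚ (Set.range (gvec α μ)) :=
              le_antisymm (Submodule.span_mono (Set.image_subset_range _ _)) hcl
            rw [heq, hL]
          · right
            have hlt : Submodule.span ℚ (gvec α μ '' {w : List S | w.length ≤ L})
                < Submodule.span ℚ (gvec α μ '' {w : List S | w.length ≤ L + 1}) :=
              lt_of_le_of_ne hmono (Ne.symm heq)
            have hfr := Submodule.finrank_lt_finrank_of_lt hlt
            omega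
  rcases key (n - 1) with h | h
  · exact h
  · refine le_antisymm (Submodule.span_mono (Set.image_subset_range _ _)) ?_
    refine le_of_eq (Submodule.eq_of_le_of_finrank_le (Submodule.span_mono (Set.image_subset_range _ _))
      ?_).symm
    have h2 : Module.finrank ℚ (Submodule.span ℚ (Set.range (gvec α μ)))
        ≤ Module.finrank ℚ (Fin n → ℚ) := Submodule.finrank_le _
    rw [Module.finrank_fin_fun] at h2
    omega

lemma gvec_bound {B : ℤ} (hB0 : (0:ℚ) ≤ (B:ℚ))
    (hαB : ∀ i, |α i| ≤ (B:ℚ)) (hμB : ∀ (σ : S) i j, |μ σ i j| ≤ (B:ℚ)) :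
    ∀ w : List S, ∀ i, |gvec α μ w i| ≤ (B:ℚ) * ((n : ℚ) * B) ^ w.length := by
  have hC : ∀ L : ℕ, (0:ℚ) ≤ (B:ℚ) * ((n : ℚ) * B) ^ L := fun L =>
    mul_nonneg hB0 (pow_nonneg (mul_nonneg (Nat.cast_nonneg n) hB0) L)
  intro w
  induction w using List.reverseRecOn with
  | nil => intro i; rw [gvec_nil]; simpa using hαB i
  | append_singleton w σ ih =>
      intro i
      rw [gvec_append]
      have hv : Matrix.vecMul (gvec α μ w) (μ σ) i = ∑ j, gvec α μ w j * μ σ j i := by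
        simp [Matrix.vecMul, dotProduct]
      rw [hv]
      calc |∑ j, gvec α μ w j * μ σ j i| ≤ ∑ j, |gvec α μ w j * μ σ j i| :=
            Finset.abs_sum_le_sum_abs _ _
        _ ≤ ∑ _j : Fin n, ((B:ℚ) * ((n:ℚ) * B) ^ w.length) * B :=
            Finset.sum_le_sum fun j _ => by
              rw [abs_mul]
              exact mul_le_mul (ih j) (hμB σ j i) (abs_nonneg _) (hC _)
        _ = (B:ℚ) * ((n:ℚ) * B) ^ (w ++ [σ]).length := by
              rw [Finset.sum_const, Finset.card_univ, Fintype.card_fin, List.length_append,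
                nsmul_eq_mul]
              simp only [List.length_cons, List.length_nil, pow_succ]
              ring

lemma phase2 (hLint : ∀ w : List S, gvec α μ w ∈ Lint n) :
    ∀ (k : ℕ) (W : Finset (List S)) (z : ℤ) (M : ℕ),
      z.toNat ≤ k →
      ([] ∈ W) →
      (∀ w ∈ W, w.length ≤ M) →
      Submodule.span ℚ (gvec α μ '' ↑W) = Submodule.span ℚ (Set.range (gvec α μ)) →
      HasDet (Submodule.span ℤ (gvec α μ '' ↑W)) (z : ℚ) →
      ∃ W' : Finset (List S), W ⊆ W' ∧
        Submodule.span ℤ (gvec α μ '' ↑W') = Submodule.span ℤ (Set.range (gvec α μ)) ∧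
        W'.card ≤ W.card + Nat.log 4 z.toNat ∧
        ∀ w ∈ W', w.length ≤ M + Nat.log 4 z.toNat := by
  classical
  intro k
  induction k with
  | zero =>
      intro W z M hk _ _ _ hdet
      have h1 : (0:ℚ) < (z : ℚ) := hasDet_pos hdet
      have h2 : 0 < z := by exact_mod_cast h1
      omega
  | succ k ihk =>
      intro W z M hk hnil hlen hfull hdet
      have hzpos : 0 < z := by exact_mod_cast (hasDet_pos hdet)
      by_cases hcl : ∀ w ∈ W, ∀ σ : S, gvec α μ (w ++ [σ])
          ∈ Submodule.span ℤ (gvec α μ '' ↑W)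
      · refine ⟨W, Finset.Subset.refl W, ?_, Nat.le_add_right _ _,
          fun w hw => le_trans (hlen w hw) (Nat.le_add_right _ _)⟩
        exact le_antisymm (Submodule.span_mono (Set.image_subset_range _ _))
          (closure_int α μ ↑W
            (Submodule.subset_span (Set.mem_image_of_mem _ (by exact_mod_cast hnil))) hcl)
      · push_neg at hcl
        obtain ⟨w, hw, σ, hσ⟩ := hcl
        set x : List S := w ++ [σ] with hx
        have hxW : x ∉ W := fun hmem =>
          hσ (Submodule.subset_span (Set.mem_image_of_mem _ (by exact_mod_cast hmem)))
        set W' : Finset (List S) := insert x W with hW'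
        have himg : (gvec α μ '' ↑W') = insert (gvec α μ x) (gvec α μ '' ↑W) := by
          rw [hW', Finset.coe_insert, Set.image_insert_eq]
        have hPle : Submodule.span ℤ (gvec α μ '' ↑W)
            ≤ Submodule.span ℤ (gvec α μ '' ↑W') :=
          Submodule.span_mono (by rw [himg]; exact Set.subset_insert _ _)
        have hPne : Submodule.span ℤ (gvec α μ '' ↑W)
            ≠ Submodule.span ℤ (gvec α μ '' ↑W') := by
          intro h
          apply hσ
          rw [h]
          exact Submodule.subset_span (by rw [himg]; exact Set.mem_insert _ _)
        have hfull' : Submodule.span ℚ (gvec α μ '' ↑W')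
            = Submodule.span ℚ (Set.range (gvec α μ)) := by
          refine le_antisymm (Submodule.span_mono (Set.image_subset_range _ _)) ?_
          rw [← hfull]
          exact Submodule.span_mono (Set.image_mono (by
            rw [hW', Finset.coe_insert]; exact Set.subset_insert _ _))
        have hfg : (Submodule.span ℤ (gvec α μ '' ↑W')).FG :=
          Submodule.fg_span ((W'.finite_toSet).image _)
        obtain ⟨c', hc'⟩ := exists_hasDet _ hfg
        have hLle : Submodule.span ℤ (gvec α μ '' ↑W') ≤ Lint n :=
          Submodule.span_le.mpr (by rintro _ ⟨u, -, rfl⟩; exact hLint u)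
        obtain ⟨z', rfl⟩ := hasDet_int hc' hLle
        have hz'pos : 0 < z' := by exact_mod_cast (hasDet_pos hc')
        have hQ : Submodule.span ℚ ((Submodule.span ℤ (gvec α μ '' ↑W) : Set (Fin n → ℚ)))
            = Submodule.span ℚ ((Submodule.span ℤ (gvec α μ '' ↑W') : Set (Fin n → ℚ))) := by
          rw [Submodule.span_span_of_tower, Submodule.span_span_of_tower, hfull, hfull']
        have h4 : 4 * z' ≤ z := hasDet_strict hdet hc' hPle hPne hQ
        have hz'k : z'.toNat ≤ k := by omega
        obtain ⟨W'', hsub, hspan, hcard, hlen'⟩ := ihk W' z' (M + 1) hz'k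
          (Finset.mem_insert_of_mem hnil)
          (by
            intro u hu
            rcases Finset.mem_insert.mp hu with rfl | hu'
            · rw [hx, List.length_append]
              have := hlen w hw
              simp only [List.length_cons, List.length_nil]
              omega
            · exact le_trans (hlen u hu') (Nat.le_succ M))
          hfull' hc'
        have hlog : Nat.log 4 z'.toNat + 1 ≤ Nat.log 4 z.toNat := by
          have h44 : z'.toNat * 4 ≤ z.toNat := by omega
          calc Nat.log 4 z'.toNat + 1 = Nat.log 4 (z'.toNat * 4) :=
                (Nat.log_mul_base (by norm_num) (by omega)).symm
            _ ≤ Nat.log 4 z.toNat := Nat.log_mono_right h44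
        refine ⟨W'', le_trans (Finset.subset_insert x W) hsub, hspan, ?_, ?_⟩
        · have hcard' : W'.card = W.card + 1 := Finset.card_insert_of_notMem hxW
          omega
        · intro u hu
          have := hlen' u hu
          omega

end Automaton

lemma frac_bound {B p q : ℤ} (hp : |p| ≤ B) (hq1 : 1 ≤ q) : |(p:ℚ)/(q:ℚ)| ≤ (B:ℚ) := by
  have hq0 : (0:ℚ) < (q:ℚ) := by exact_mod_cast hq1
  rw [abs_div, abs_of_pos hq0]
  have h1 : |(p:ℚ)| ≤ (B:ℚ) := by exact_mod_cast hp
  calc |(p:ℚ)| / (q:ℚ) ≤ |(p:ℚ)| := div_le_self (abs_nonneg _) (by exact_mod_cast hq1)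
    _ ≤ (B:ℚ) := h1

lemma numeric_bound (n K : ℕ) (B : ℤ) (hn : 1 ≤ n) (hB : 2 ≤ B)
    (h : (4:ℝ)^K ≤ ((n:ℝ) * ((B:ℝ) * ((n:ℝ) * B)^(n-1))^2)^n) :
    (K:ℝ) ≤ (n:ℝ)*((n:ℝ)-1/2)*Real.logb 2 (n:ℝ) + (n:ℝ)^2 * Real.logb 2 (B:ℝ) := by
  have hnR : (1:ℝ) ≤ (n:ℝ) := by exact_mod_cast hn
  have hBR : (2:ℝ) ≤ (B:ℝ) := by exact_mod_cast hB
  have hnpos : (0:ℝ) < n := by linarith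
  have hBpos : (0:ℝ) < B := by linarith
  set Ln := Real.logb 2 (n:ℝ) with hLn
  set LB := Real.logb 2 (B:ℝ) with hLB
  have hLn0 : 0 ≤ Ln := Real.logb_nonneg (by norm_num) hnR
  have hLB0 : 0 ≤ LB := Real.logb_nonneg (by norm_num) (by linarith)
  set C : ℝ := (B:ℝ) * ((n:ℝ) * B)^(n-1) with hC
  have hCpos : 0 < C := by positivity
  set Q : ℝ := (n:ℝ) * C^2 with hQ
  have hQpos : 0 < Q := by positivity
  have h2K : ((2:ℝ))^(2*K) ≤ Q^n := by
    have he : ((2:ℝ))^(2*K) = (4:ℝ)^K := by rw [pow_mul]; norm_num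
    rw [he]; exact h
  have hlhs : Real.logb 2 ((2:ℝ)^(2*K)) = 2*K := by
    rw [Real.logb_pow, Real.logb_self_eq_one (by norm_num : (1:ℝ) < 2)]
    push_cast; ring
  have hmono : Real.logb 2 ((2:ℝ)^(2*K)) ≤ Real.logb 2 (Q^n) := by
    apply Real.logb_le_logb_of_le (by norm_num) (by positivity) h2K
  have hrhs : Real.logb 2 (Q^n) = (n:ℝ) * (Ln + 2*(LB + ((n:ℝ)-1) * (Ln + LB))) := by
    rw [Real.logb_pow, hQ, Real.logb_mul (ne_of_gt hnpos) (by positivity),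
      Real.logb_pow, hC, Real.logb_mul (ne_of_gt hBpos) (by positivity),
      Real.logb_pow, Real.logb_mul (ne_of_gt hnpos) (ne_of_gt hBpos)]
    have hcast : ((n - 1 : ℕ) : ℝ) = (n:ℝ) - 1 := by
      push_cast [Nat.cast_sub hn]; ring
    rw [hcast, ← hLn, ← hLB]
    ring
  rw [hlhs, hrhs] at hmono
  nlinarith [hmono]

end FWM

set_option maxHeartbeats 2000000 in
open FWM in
/-- Let `A = (α, μ, β)` be a `ℚ`-weighted automaton of dimension `n`
whose entries of `α` and `μ(σ)` are fractions `p/q` with `|p| ≤ B`, `1 ≤ q ≤ B`, for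
an integer `B ≥ 2`.  If `α·μ(w) ∈ ℤ^n` for every word `w`, then, with
`k₀ := n(n−1/2)log₂ n + n²log₂ B`, there is a finite set `W` of at most `k₀ + n`
words, each of length at most `k₀ + n`, such that `{α·μ(w) : w ∈ W}` generates the
forward module `span_ℤ{α·μ(w) : w ∈ Σ*}`. -/
theorem forward_module_finitely_generated_by_short_words
    {S : Type*} [Fintype S] (n : ℕ)
    (α : Fin n → ℚ) (μ : S → Matrix (Fin n) (Fin n) ℚ) (β : Fin n → ℚ)
    (B : ℤ) (hB : 2 ≤ B)
    (hα : ∀ i : Fin n, ∃ p q : ℤ, |p| ≤ B ∧ 1 ≤ q ∧ q ≤ B ∧ α i = (p : ℚ) / (q : ℚ))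
    (hμ : ∀ (σ : S) (i j : Fin n),
      ∃ p q : ℤ, |p| ≤ B ∧ 1 ≤ q ∧ q ≤ B ∧ μ σ i j = (p : ℚ) / (q : ℚ))
    (hint : ∀ (w : List S) (i : Fin n),
      ∃ z : ℤ, Matrix.vecMul α ((w.map μ).prod) i = (z : ℚ)) :
    ∃ W : Finset (List S),
      (W.card : ℝ) ≤
        ((n : ℝ) * ((n : ℝ) - 1 / 2) * Real.logb 2 (n : ℝ)
          + (n : ℝ) ^ 2 * Real.logb 2 (B : ℝ)) + (n : ℝ) ∧
      (∀ w ∈ W, (w.length : ℝ) ≤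
        ((n : ℝ) * ((n : ℝ) - 1 / 2) * Real.logb 2 (n : ℝ)
          + (n : ℝ) ^ 2 * Real.logb 2 (B : ℝ)) + (n : ℝ)) ∧
      Submodule.span ℤ
          ((fun w : List S => Matrix.vecMul α ((w.map μ).prod)) '' (W : Set (List S)))
        = Submodule.span ℤ
          (Set.range (fun w : List S => Matrix.vecMul α ((w.map μ).prod))) := by
  classical
  -- Case `n = 0`
  rcases Nat.eq_zero_or_pos n with hn0 | hn1
  · subst hn0
    refine ⟨∅, ?_, ?_, ?_⟩
    · norm_num [Real.logb_zero]
    · intro w hw; simp at hw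
    · have hss : ∀ x : Fin 0 → ℚ, x = 0 := fun x => funext fun i => i.elim0
      apply le_antisymm <;>
        (rw [Submodule.span_le]; intro x _; rw [SetLike.mem_coe, hss x];
         exact Submodule.zero_mem _)
  have hnR : (1:ℝ) ≤ (n:ℝ) := by exact_mod_cast hn1
  have hBR : (2:ℝ) ≤ (B:ℝ) := by exact_mod_cast hB
  have hLn0 : 0 ≤ Real.logb 2 (n:ℝ) := Real.logb_nonneg (by norm_num) hnR
  have hLB0 : 0 ≤ Real.logb 2 (B:ℝ) := Real.logb_nonneg (by norm_num) (by linarith)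
  have hk₀0 : 0 ≤ (n : ℝ) * ((n : ℝ) - 1 / 2) * Real.logb 2 (n : ℝ)
      + (n : ℝ) ^ 2 * Real.logb 2 (B : ℝ) := by
    have h1 : (0:ℝ) ≤ (n : ℝ) * ((n : ℝ) - 1 / 2) := by nlinarith
    nlinarith
  -- Case `α = 0`
  by_cases hα0 : α = 0
  · refine ⟨{[]}, ?_, ?_, ?_⟩
    · simp only [Finset.card_singleton, Nat.cast_one]
      linarith
    · intro w hw
      rw [Finset.mem_singleton] at hw
      subst hw
      simp only [List.length_nil, Nat.cast_zero]
      linarith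
    · have hz : ∀ w : List S, Matrix.vecMul α ((w.map μ).prod) = 0 := by
        intro w; rw [hα0]; exact Matrix.zero_vecMul _
      refine le_antisymm (Submodule.span_mono (Set.image_subset_range _ _)) ?_
      rw [Submodule.span_le]
      rintro _ ⟨u, rfl⟩
      rw [SetLike.mem_coe]
      show Matrix.vecMul α ((u.map μ).prod) ∈ _
      rw [hz u]
      exact Submodule.zero_mem _
  -- Main case
  have hLint : ∀ w : List S, gvec α μ w ∈ Lint n := fun w => (mem_Lint_iff).mpr (hint w)
  have hαB : ∀ i, |α i| ≤ (B:ℚ) := by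
    intro i
    obtain ⟨p, q, hp, hq1, _, hval⟩ := hα i
    rw [hval]; exact frac_bound hp hq1
  have hμB : ∀ (σ : S) i j, |μ σ i j| ≤ (B:ℚ) := by
    intro σ i j
    obtain ⟨p, q, hp, hq1, _, hval⟩ := hμ σ i j
    rw [hval]; exact frac_bound hp hq1
  have hB1 : (1:ℚ) ≤ (B:ℚ) := by exact_mod_cast (by omega : (1:ℤ) ≤ B)
  have hB0 : (0:ℚ) ≤ (B:ℚ) := by linarith
  have hnQ1 : (1:ℚ) ≤ (n:ℚ) := by exact_mod_cast hn1
  have hbound := gvec_bound α μ hB0 hαB hμB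
  set CQ : ℚ := (B:ℚ) * ((n:ℚ) * B)^(n-1) with hCQ
  set QQ : ℚ := (n:ℚ) * CQ^2 with hQQ
  have hnB1 : (1:ℚ) ≤ (n:ℚ) * B := by nlinarith
  have hC1 : (1:ℚ) ≤ CQ := by
    rw [hCQ]
    nlinarith [one_le_pow₀ hnB1 (n := n - 1)]
  have hQQ1 : (1:ℚ) ≤ QQ := by rw [hQQ]; nlinarith
  have hdot : ∀ u : List S, u.length ≤ n - 1 → gvec α μ u ⬝ᵥ gvec α μ u ≤ QQ := by
    intro u hu
    have hCb : ∀ j, |gvec α μ u j| ≤ CQ := by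
      intro j
      refine le_trans (hbound u j) ?_
      rw [hCQ]
      exact mul_le_mul_of_nonneg_left (pow_le_pow_right₀ hnB1 hu) hB0
    have hsum : gvec α μ u ⬝ᵥ gvec α μ u = ∑ j, gvec α μ u j * gvec α μ u j := rfl
    rw [hsum, hQQ]
    calc (∑ j, gvec α μ u j * gvec α μ u j) ≤ ∑ _j : Fin n, CQ^2 :=
          Finset.sum_le_sum fun j _ => by
            have h1 := hCb j
            have h2 : gvec α μ u j * gvec α μ u j = |gvec α μ u j| * |gvec α μ u j| :=
              (abs_mul_abs_self _).symm
            rw [h2, sq]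
            exact mul_le_mul h1 h1 (abs_nonneg _) (by linarith)
      _ = (n:ℚ) * CQ^2 := by
            rw [Finset.sum_const, Finset.card_univ, Fintype.card_fin, nsmul_eq_mul]
  -- Phase 1: a short linearly independent spanning family
  have hfullshort := full_by_short α μ hα0
  have hαt : α ∈ gvec α μ '' {w : List S | w.length ≤ n - 1} :=
    ⟨[], by simp, gvec_nil α μ⟩
  have hsingLI : LinearIndependent ℚ (fun x => (x : Fin n → ℚ) :
      ({α} : Set (Fin n → ℚ)) → Fin n → ℚ) := (linearIndepOn_singleton_iff ℚ (v := id)).mpr hα0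
  obtain ⟨bs, hbst, hsbs, hbsp, (hbLI : LinearIndependent ℚ (fun x => (x : Fin n → ℚ) : bs → Fin n → ℚ))⟩ :=
    exists_linearIndepOn_id_extension hsingLI (Set.singleton_subset_iff.mpr hαt)
  have hbfin : bs.Finite := hbLI.setFinite
  haveI := hbfin.fintype
  set m := Fintype.card ↥bs with hm
  set e := Fintype.equivFin ↥bs with he
  set vb : Fin m → Fin n → ℚ := fun i => ((e.symm i : ↥bs) : Fin n → ℚ) with hvb
  have hvbLI : LinearIndependent ℚ vb := hbLI.comp e.symm e.symm.injective
  have hrange : Set.range vb = bs := by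
    rw [show vb = (fun x : ↥bs => (x : Fin n → ℚ)) ∘ e.symm from rfl,
      e.symm.surjective.range_comp]
    exact Subtype.range_coe
  have hmn : m ≤ n := by
    have h1 := hvbLI.fintype_card_le_finrank
    rwa [Fintype.card_fin, Module.finrank_fin_fun] at h1
  have hwords : ∀ i : Fin m, ∃ u : List S,
      u.length ≤ n - 1 ∧ gvec α μ u = vb i ∧ (vb i = α → u = []) := by
    intro i
    by_cases hvbi : vb i = α
    · exact ⟨[], by simp, by rw [gvec_nil]; exact hvbi.symm, fun _ => rfl⟩
    · have hmem : vb i ∈ bs := by rw [← hrange]; exact ⟨i, rfl⟩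
      obtain ⟨u, hu, huv⟩ := hbst hmem
      exact ⟨u, hu, huv, fun h => absurd h hvbi⟩
  choose wf hwf1 hwf2 hwf3 using hwords
  set W₁ : Finset (List S) := Finset.image wf Finset.univ with hW₁
  have hnilW₁ : [] ∈ W₁ := by
    have hαbs : α ∈ bs := hsbs rfl
    have hvbi : vb (e ⟨α, hαbs⟩) = α := by
      rw [hvb]; simp
    exact Finset.mem_image.mpr ⟨e ⟨α, hαbs⟩, Finset.mem_univ _, hwf3 _ hvbi⟩
  have hcardW₁ : W₁.card ≤ m := le_trans Finset.card_image_le (by simp)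
  have hlenW₁ : ∀ u ∈ W₁, u.length ≤ n - 1 := by
    intro u hu
    obtain ⟨i, -, rfl⟩ := Finset.mem_image.mp hu
    exact hwf1 i
  have hbsimg : bs ⊆ gvec α μ '' ↑W₁ := by
    intro x hx
    rw [← hrange] at hx
    obtain ⟨i, rfl⟩ := hx
    exact ⟨wf i, Finset.mem_coe.mpr (Finset.mem_image.mpr ⟨i, Finset.mem_univ _, rfl⟩),
      hwf2 i⟩
  have hfull₁ : Submodule.span ℚ (gvec α μ '' ↑W₁)
      = Submodule.span ℚ (Set.range (gvec α μ)) := by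
    refine le_antisymm (Submodule.span_mono (Set.image_subset_range _ _)) ?_
    rw [← hfullshort]
    exact le_trans (Submodule.span_le.mpr hbsp) (Submodule.span_mono hbsimg)
  -- Initial determinant bound
  have hM₀det : HasDet (Submodule.span ℤ (Set.range vb)) ((gram vb).det) :=
    ⟨m, vb, hvbLI, rfl, rfl⟩
  have hM₀le : Submodule.span ℤ (Set.range vb) ≤ Submodule.span ℤ (gvec α μ '' ↑W₁) := by
    rw [Submodule.span_le, hrange]
    exact subset_trans hbsimg Submodule.subset_span
  have hfg₁ : (Submodule.span ℤ (gvec α μ '' ↑W₁)).FG :=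
    Submodule.fg_span ((W₁.finite_toSet).image _)
  obtain ⟨c₁, hc₁⟩ := exists_hasDet _ hfg₁
  have hLle₁ : Submodule.span ℤ (gvec α μ '' ↑W₁) ≤ Lint n :=
    Submodule.span_le.mpr (by rintro _ ⟨u, -, rfl⟩; exact hLint u)
  obtain ⟨z₁, rfl⟩ := hasDet_int hc₁ hLle₁
  have hz₁pos : 0 < z₁ := by exact_mod_cast hasDet_pos hc₁
  have hspbs : Submodule.span ℚ bs = Submodule.span ℚ (gvec α μ '' ↑W₁) := by
    refine le_antisymm (Submodule.span_mono hbsimg) ?_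
    rw [hfull₁, ← hfullshort]
    exact Submodule.span_le.mpr hbsp
  have hQ₁ : Submodule.span ℚ ((Submodule.span ℤ (Set.range vb) : Set (Fin n → ℚ)))
      = Submodule.span ℚ ((Submodule.span ℤ (gvec α μ '' ↑W₁) : Set (Fin n → ℚ))) := by
    rw [Submodule.span_span_of_tower, Submodule.span_span_of_tower, hrange, hspbs]
  obtain ⟨d, hd1, -⟩ := hasDet_compare hM₀det hc₁ hM₀le hQ₁
  have hdet_pos : 0 < (gram vb).det := (gram_det_pos_le vb hvbLI).1
  have hdne : d ≠ 0 := by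
    rintro rfl
    rw [Int.cast_zero] at hd1
    simp at hd1
    rw [hd1] at hdet_pos
    exact lt_irrefl _ hdet_pos
  have hz₁le : (z₁:ℚ) ≤ (gram vb).det := by
    have h1 : (1:ℤ) ≤ d^2 := by rcases lt_or_gt_of_ne hdne with h | h <;> nlinarith
    have h1Q : (1:ℚ) ≤ (d:ℚ)^2 := by exact_mod_cast h1
    have hz₁p : (0:ℚ) < (z₁:ℚ) := hasDet_pos hc₁
    rw [hd1]; nlinarith
  have hHad : (gram vb).det ≤ QQ ^ n := by
    have h1 := (gram_det_pos_le vb hvbLI).2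
    have h2 : (∏ i, vb i ⬝ᵥ vb i) ≤ QQ ^ m := by
      have h3 : (∏ i : Fin m, vb i ⬝ᵥ vb i) ≤ ∏ _i : Fin m, QQ :=
        Finset.prod_le_prod (fun i _ => dotProduct_self_nonneg _) (fun i _ => by
          rw [← hwf2 i]; exact hdot (wf i) (hwf1 i))
      rwa [Finset.prod_const, Finset.card_univ, Fintype.card_fin] at h3
    have h4 : QQ ^ m ≤ QQ ^ n := pow_le_pow_right₀ hQQ1 hmn
    exact le_trans h1 (le_trans h2 h4)
  have hz₁QQ : (z₁:ℚ) ≤ QQ ^ n := le_trans hz₁le hHad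
  -- Phase 2
  obtain ⟨Wf, hWsub, hWspan, hWcard, hWlen⟩ := phase2 α μ hLint z₁.toNat W₁ z₁ (n-1)
    le_rfl hnilW₁ hlenW₁ hfull₁ hc₁
  set K := Nat.log 4 z₁.toNat with hK
  have hz₁0 : z₁.toNat ≠ 0 := by omega
  have hpowK : (4:ℕ)^K ≤ z₁.toNat := Nat.pow_log_le_self 4 hz₁0
  have h4K : (4:ℝ)^K ≤ ((n:ℝ) * ((B:ℝ) * ((n:ℝ) * B)^(n-1))^2)^n := by
    have h1 : ((4:ℕ)^K : ℝ) ≤ (z₁.toNat : ℝ) := by exact_mod_cast hpowK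
    have h2 : (z₁.toNat : ℝ) = ((z₁ : ℤ) : ℝ) := by
      exact_mod_cast congrArg (fun t : ℤ => (t : ℝ)) (Int.toNat_of_nonneg (le_of_lt hz₁pos))
    have h3 : ((z₁ : ℤ) : ℝ) ≤ (((QQ ^ n : ℚ)):ℝ) := by exact_mod_cast hz₁QQ
    have h4 : ((QQ ^ n : ℚ) : ℝ) = ((n:ℝ) * ((B:ℝ) * ((n:ℝ) * B)^(n-1))^2)^n := by
      rw [hQQ, hCQ]; push_cast; ring
    calc (4:ℝ)^K = ((4:ℕ)^K : ℝ) := by push_cast; ring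
      _ ≤ (z₁.toNat : ℝ) := h1
      _ = ((z₁ : ℤ) : ℝ) := h2
      _ ≤ ((QQ ^ n : ℚ) : ℝ) := h3
      _ = _ := h4
  have hKk₀ := numeric_bound n K B hn1 hB h4K
  refine ⟨Wf, ?_, ?_, hWspan⟩
  · have h1 : Wf.card ≤ n + K := by
      have := hWcard
      omega
    calc (Wf.card : ℝ) ≤ ((n + K : ℕ) : ℝ) := by exact_mod_cast h1
      _ = (n:ℝ) + (K:ℝ) := by push_cast; ring
      _ ≤ _ := by linarith
  · intro w hw
    have h1 : w.length ≤ (n - 1) + K := hWlen w hw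
    have h2 : ((n - 1 : ℕ) : ℝ) ≤ (n:ℝ) := by exact_mod_cast Nat.sub_le n 1
    calc (w.length : ℝ) ≤ (((n-1) + K : ℕ) : ℝ) := by exact_mod_cast h1
      _ = ((n-1 : ℕ) : ℝ) + (K:ℝ) := by push_cast; ring
      _ ≤ _ := by linarith
end

section
/- Let A be a ℚ-weighted automaton over a finite alphabet Σ such that f_A(w) ∈ ℤ for every word w ∈ Σ*. Then there exists a ℤ-weighted automaton A'' over Σ with f_{A''} = f_A that is minimal as a ℚ-weighted automaton: no ℚ-weighted automaton of strictly smaller dimension computes f_A. -/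
open Matrix

/-- The function computed by a `ℚ`-weighted automaton `(α, μ, β)`:
`f_A(w) = α·μ(w)·β`, where `μ` extends to words as a monoid homomorphism. -/
noncomputable def fWA {S ι : Type*} [Fintype ι] [DecidableEq ι]
    (α : ι → ℚ) (μ : S → Matrix ι ι ℚ) (β : ι → ℚ) (w : List S) : ℚ :=
  α ⬝ᵥ ((w.map μ).prod).mulVec β

namespace WAaux

variable {S : Type*}

lemma fWA_append {m : ℕ} (α : Fin m → ℚ) (μ : S → Matrix (Fin m) (Fin m) ℚ)
    (β : Fin m → ℚ) (w u : List S) :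
    fWA α μ β (w ++ u) = (α ᵥ* ((w.map μ).prod)) ⬝ᵥ (((u.map μ).prod) *ᵥ β) := by
  unfold fWA
  rw [List.map_append, List.prod_append, ← Matrix.mulVec_mulVec, Matrix.dotProduct_mulVec]

/-- Intertwining lemma: if `B * μ σ = c σ * B` and `α = a ᵥ* B`, then the automaton
`(a, c, B *ᵥ β)` computes the same function as `(α, μ, β)`. -/
lemma intertwine {m k : ℕ} (α : Fin m → ℚ) (μ : S → Matrix (Fin m) (Fin m) ℚ)
    (β : Fin m → ℚ) (B : Matrix (Fin k) (Fin m) ℚ) (c : S → Matrix (Fin k) (Fin k) ℚ)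
    (hB : ∀ σ, B * μ σ = c σ * B) (a : Fin k → ℚ) (ha : a ᵥ* B = α) (w : List S) :
    fWA a c (B *ᵥ β) w = fWA α μ β w := by
  have key : ∀ w : List S, B * ((w.map μ).prod) = ((w.map c).prod) * B := by
    intro w
    induction w with
    | nil => simp
    | cons σ t ih =>
        simp only [List.map_cons, List.prod_cons]
        rw [← Matrix.mul_assoc, hB σ, Matrix.mul_assoc, ih, ← Matrix.mul_assoc]
  unfold fWA
  rw [Matrix.mulVec_mulVec, ← key, ← Matrix.mulVec_mulVec, Matrix.dotProduct_mulVec, ha,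
    Matrix.dotProduct_mulVec]

lemma prod_map_transpose {m : ℕ} (μ : S → Matrix (Fin m) (Fin m) ℚ) (w : List S) :
    ((w.map fun σ => (μ σ)ᵀ).prod) = ((w.reverse.map μ).prod)ᵀ := by
  rw [Matrix.transpose_list_prod]
  congr 1
  rw [List.map_reverse, List.map_reverse, List.reverse_reverse, List.map_map]
  rfl

/-- The transposed automaton computes the reversed function. -/
lemma fWA_transpose {m : ℕ} (α : Fin m → ℚ) (μ : S → Matrix (Fin m) (Fin m) ℚ)
    (β : Fin m → ℚ) (w : List S) :
    fWA β (fun σ => (μ σ)ᵀ) α w = fWA α μ β w.reverse := by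
  unfold fWA
  rw [prod_map_transpose, Matrix.mulVec_transpose, dotProduct_comm, Matrix.dotProduct_mulVec]


/-- Coordinate sums: coercion of a `ℚ`-linear combination inside a submodule. -/
lemma coordsum_Q {m k : ℕ} {V : Submodule ℚ (Fin m → ℚ)} (r : Fin k → ℚ) (v : Fin k → V)
    (j : Fin m) : (((∑ i, r i • v i : V) : Fin m → ℚ)) j = ∑ i, r i * (v i : Fin m → ℚ) j := by
  induction (Finset.univ : Finset (Fin k)) using Finset.induction with
  | empty => simp
  | insert hx ih => simp_all

/-- Restriction of an automaton to the span of its forward vectors. -/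
lemma reduce {m : ℕ} (α : Fin m → ℚ) (μ : S → Matrix (Fin m) (Fin m) ℚ) (β : Fin m → ℚ) :
    ∃ (α' : Fin (Module.finrank ℚ
        (Submodule.span ℚ (Set.range fun w : List S => α ᵥ* ((w.map μ).prod)))) → ℚ)
      (μ' : S → Matrix (Fin _) (Fin _) ℚ) (β' : Fin _ → ℚ),
      ∀ w, fWA α' μ' β' w = fWA α μ β w := by
  set V := Submodule.span ℚ (Set.range fun w : List S => α ᵥ* ((w.map μ).prod)) with hV
  have hαV : α ∈ V := Submodule.subset_span ⟨[], by simp⟩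
  have hinv : ∀ σ : S, ∀ x ∈ V, x ᵥ* μ σ ∈ V := by
    intro σ x hx
    have hle : V ≤ Submodule.comap ((μ σ).vecMulLinear) V := by
      rw [hV, Submodule.span_le]
      rintro _ ⟨w, rfl⟩
      simp only [Submodule.mem_comap, Matrix.vecMulLinear_apply]
      refine Submodule.subset_span ⟨w ++ [σ], ?_⟩
      show α ᵥ* (((w ++ [σ]).map μ).prod) = (μ σ).vecMulLinear (α ᵥ* ((w.map μ).prod))
      rw [List.map_append, List.prod_append]
      simp [Matrix.vecMul_vecMul]
    exact hle hx
  let bas := Module.finBasis ℚ V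
  set k := Module.finrank ℚ V with hk
  let B : Matrix (Fin k) (Fin m) ℚ := Matrix.of fun i j => (bas i : Fin m → ℚ) j
  let c : S → Matrix (Fin k) (Fin k) ℚ := fun σ => Matrix.of fun i j =>
    bas.repr ⟨(bas i : Fin m → ℚ) ᵥ* μ σ, hinv σ _ (bas i).2⟩ j
  have hB : ∀ σ, B * μ σ = c σ * B := by
    intro σ
    ext i j
    have h1 : (B * μ σ) i j = ((bas i : Fin m → ℚ) ᵥ* μ σ) j := by
      simp [Matrix.mul_apply, Matrix.vecMul, dotProduct, B]
    have h2 := congrArg (fun x : V => (x : Fin m → ℚ) j)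
      (bas.sum_repr ⟨(bas i : Fin m → ℚ) ᵥ* μ σ, hinv σ _ (bas i).2⟩)
    simp only at h2
    rw [coordsum_Q] at h2
    rw [h1, ← h2]
    simp [Matrix.mul_apply, c, B]
  have ha : (bas.repr ⟨α, hαV⟩ : Fin k → ℚ) ᵥ* B = α := by
    ext j
    have h2 := congrArg (fun x : V => (x : Fin m → ℚ) j) (bas.sum_repr ⟨α, hαV⟩)
    simp only at h2
    rw [coordsum_Q] at h2
    rw [← h2]
    simp [Matrix.vecMul, dotProduct, B]
  exact ⟨_, c, B *ᵥ β, fun w => intertwine α μ β B c hB _ ha w⟩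

end WAaux

namespace WAaux

/-- Right dot-product as a `ℤ`-linear map. -/
def dotR {m : ℕ} (y : Fin m → ℚ) : (Fin m → ℚ) →ₗ[ℤ] ℚ where
  toFun x := x ⬝ᵥ y
  map_add' x x' := add_dotProduct x x' y
  map_smul' z x := smul_dotProduct z x y

@[simp] lemma dotR_apply {m : ℕ} (y x : Fin m → ℚ) : dotR y x = x ⬝ᵥ y := rfl

/-- Left dot-product as a `ℚ`-linear map. -/
def dotL {m : ℕ} (x : Fin m → ℚ) : (Fin m → ℚ) →ₗ[ℚ] ℚ where
  toFun y := x ⬝ᵥ y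
  map_add' y y' := dotProduct_add x y y'
  map_smul' c y := dotProduct_smul c x y

@[simp] lemma dotL_apply {m : ℕ} (x y : Fin m → ℚ) : dotL x y = x ⬝ᵥ y := rfl

/-- The integers inside `ℚ`, as a `ℤ`-submodule. -/
def intSub : Submodule ℤ ℚ := LinearMap.range (Algebra.linearMap ℤ ℚ)

lemma mem_intSub {q : ℚ} : q ∈ intSub ↔ ∃ z : ℤ, q = (z : ℚ) := by
  simp [intSub, LinearMap.mem_range, Algebra.linearMap_apply, algebraMap_int_eq, eq_comm]

/-- `ℤ`-coordinate sums inside a `ℤ`-submodule of `ℚ^m`. -/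
lemma coordsum_Z {m k : ℕ} {L : Submodule ℤ (Fin m → ℚ)} (r : Fin k → ℤ) (v : Fin k → L)
    (j : Fin m) :
    (((∑ i, r i • v i : L) : Fin m → ℚ)) j = ∑ i, (r i : ℚ) * (v i : Fin m → ℚ) j := by
  induction (Finset.univ : Finset (Fin k)) using Finset.induction with
  | empty => simp
  | insert hx ih => simp_all [zsmul_eq_mul]

end WAaux

/-- If a `ℚ`-weighted automaton `A` computes an integer value on
every word, then there is a `ℤ`-weighted automaton `A''` computing the same function
which is minimal as a `ℚ`-weighted automaton: no `ℚ`-weighted automaton of strictly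
smaller dimension computes `f_A`. -/
theorem exists_minimal_Z_automaton
    {S : Type*} [Fintype S] (n : ℕ)
    (α : Fin n → ℚ) (μ : S → Matrix (Fin n) (Fin n) ℚ) (β : Fin n → ℚ)
    (hint : ∀ w : List S, ∃ z : ℤ, fWA α μ β w = (z : ℚ)) :
    ∃ (n'' : ℕ) (α'' : Fin n'' → ℤ) (μ'' : S → Matrix (Fin n'') (Fin n'') ℤ)
      (β'' : Fin n'' → ℤ),
      (∀ w : List S,
        fWA (fun i => (α'' i : ℚ)) (fun σ => (μ'' σ).map (fun z => (z : ℚ)))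
            (fun i => (β'' i : ℚ)) w
          = fWA α μ β w) ∧
      (∀ (k : ℕ) (α' : Fin k → ℚ) (μ' : S → Matrix (Fin k) (Fin k) ℚ)
          (β' : Fin k → ℚ),
        (∀ w : List S, fWA α' μ' β' w = fWA α μ β w) → n'' ≤ k) := by
  classical
  have hex : ∃ k : ℕ, ∃ (α' : Fin k → ℚ) (μ' : S → Matrix (Fin k) (Fin k) ℚ)
      (β' : Fin k → ℚ), ∀ w, fWA α' μ' β' w = fWA α μ β w := ⟨n, α, μ, β, fun _ => rfl⟩
  set m := Nat.find hex with hm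
  obtain ⟨α₀, μ₀, β₀, hf⟩ := Nat.find_spec hex
  have hmin : ∀ (k : ℕ) (α' : Fin k → ℚ) (μ' : S → Matrix (Fin k) (Fin k) ℚ)
      (β' : Fin k → ℚ), (∀ w, fWA α' μ' β' w = fWA α μ β w) → m ≤ k :=
    fun k a' m' b' h => Nat.find_min' hex ⟨a', m', b', h⟩
  have hintf : ∀ w, ∃ z : ℤ, fWA α₀ μ₀ β₀ w = (z : ℚ) := fun w => by
    rw [hf w]; exact hint w
  -- backward vectors
  set g : List S → (Fin m → ℚ) := fun u => ((u.map μ₀).prod) *ᵥ β₀ with hg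
  have hgrev : ∀ w : List S, β₀ ᵥ* ((w.map fun σ => (μ₀ σ)ᵀ).prod) = g w.reverse := by
    intro w
    rw [WAaux.prod_map_transpose, Matrix.vecMul_transpose]
  -- the backward space is full, by minimality
  have hW : Submodule.span ℚ (Set.range g) = ⊤ := by
    by_contra hne
    obtain ⟨α', μ', β', hred⟩ := WAaux.reduce β₀ (fun σ => (μ₀ σ)ᵀ) α₀
    have hrange : (Set.range fun w : List S => β₀ ᵥ* ((w.map fun σ => (μ₀ σ)ᵀ).prod))
        = Set.range g := by
      ext x
      constructor
      · rintro ⟨w, rfl⟩; exact ⟨w.reverse, (hgrev w).symm⟩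
      · rintro ⟨u, rfl⟩
        refine ⟨u.reverse, ?_⟩
        show β₀ ᵥ* ((u.reverse.map fun σ => (μ₀ σ)ᵀ).prod) = g u
        rw [hgrev u.reverse, List.reverse_reverse]
    have hlt : Module.finrank ℚ
        (Submodule.span ℚ (Set.range fun w : List S =>
          β₀ ᵥ* ((w.map fun σ => (μ₀ σ)ᵀ).prod))) < m := by
      rw [hrange]
      have := Submodule.finrank_lt (K := ℚ) (V := Fin m → ℚ)
        hne
      simpa [Module.finrank_fin_fun] using this
    have hP : m ≤ _ := hmin _ β' (fun σ => (μ' σ)ᵀ) α' (fun w => by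
      rw [WAaux.fWA_transpose, hred, WAaux.fWA_transpose, hf, List.reverse_reverse])
    omega
  -- forward vectors and their ℤ-span
  set v : List S → (Fin m → ℚ) := fun w => α₀ ᵥ* ((w.map μ₀).prod) with hv
  set L : Submodule ℤ (Fin m → ℚ) := Submodule.span ℤ (Set.range v) with hL
  have hαL : α₀ ∈ L := Submodule.subset_span ⟨[], by simp [hv]⟩
  have hLinv : ∀ σ : S, ∀ x ∈ L, x ᵥ* μ₀ σ ∈ L := by
    intro σ x hx
    have hle : L ≤ Submodule.comap (((μ₀ σ).vecMulLinear).restrictScalars ℤ) L := by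
      rw [hL, Submodule.span_le]
      rintro _ ⟨w, rfl⟩
      simp only [SetLike.mem_coe, Submodule.mem_comap, LinearMap.coe_restrictScalars,
        Matrix.vecMulLinear_apply]
      refine Submodule.subset_span ⟨w ++ [σ], ?_⟩
      show α₀ ᵥ* (((w ++ [σ]).map μ₀).prod) = (v w) ᵥ* μ₀ σ
      rw [List.map_append, List.prod_append]
      simp [hv, Matrix.vecMul_vecMul]
    exact hle hx
  -- integrality of pairings
  have hdot : ∀ x ∈ L, ∀ u : List S, ∃ z : ℤ, x ⬝ᵥ g u = (z : ℚ) := by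
    intro x hx u
    have hle : L ≤ Submodule.comap (WAaux.dotR (g u)) WAaux.intSub := by
      rw [hL, Submodule.span_le]
      rintro _ ⟨w, rfl⟩
      simp only [SetLike.mem_coe, Submodule.mem_comap, WAaux.dotR_apply]
      rw [WAaux.mem_intSub]
      have := WAaux.fWA_append α₀ μ₀ β₀ w u
      rw [← this]
      exact hintf (w ++ u)
    exact WAaux.mem_intSub.mp (hle hx)
  have hdotβ : ∀ x ∈ L, ∃ z : ℤ, x ⬝ᵥ β₀ = (z : ℚ) := by
    intro x hx
    have hgnil : g [] = β₀ := by simp [hg]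
    rw [← hgnil]
    exact hdot x hx []
  -- a finite spanning set of backward vectors
  have hTex : ∃ T : Finset (Fin m → ℚ), ↑T ⊆ Set.range g ∧
      Submodule.span ℚ (T : Set (Fin m → ℚ)) = ⊤ := by
    have h1 : ∀ j : Fin m, ∃ T : Finset (Fin m → ℚ), ↑T ⊆ Set.range g ∧
        Pi.single j (1 : ℚ) ∈ Submodule.span ℚ (T : Set (Fin m → ℚ)) := by
      intro j
      have hmem : Pi.single j (1 : ℚ) ∈ Submodule.span ℚ (Set.range g) := by
        rw [hW]; trivial
      exact Submodule.mem_span_finite_of_mem_span hmem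
    choose T hTsub hTmem using h1
    refine ⟨Finset.univ.biUnion T, ?_, ?_⟩
    · intro x hx
      rw [Finset.coe_biUnion] at hx
      simp only [Set.mem_iUnion] at hx
      obtain ⟨j, _, hj⟩ := hx
      exact hTsub j hj
    · rw [eq_top_iff, ← (Pi.basisFun ℚ (Fin m)).span_eq, Submodule.span_le]
      rintro _ ⟨j, rfl⟩
      have hPi : (Pi.basisFun ℚ (Fin m)) j = Pi.single j (1 : ℚ) := by
        simp [Pi.basisFun_apply]
      rw [hPi]
      refine SetLike.mem_coe.mpr (Submodule.span_mono ?_ (hTmem j))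
      intro y hy
      simp only [Finset.coe_biUnion, Set.mem_iUnion]
      exact ⟨j, Finset.mem_univ j, hy⟩
  obtain ⟨T, hTsub, hTspan⟩ := hTex
  -- the evaluation map E
  let E : (Fin m → ℚ) →ₗ[ℤ] ({y // y ∈ T} → ℚ) :=
    LinearMap.pi fun t => WAaux.dotR (t : Fin m → ℚ)
  have hEinj : ∀ x : Fin m → ℚ, E x = 0 → x = 0 := by
    intro x hx
    have hker : Submodule.span ℚ (T : Set (Fin m → ℚ)) ≤ LinearMap.ker (WAaux.dotL x) := by
      rw [Submodule.span_le]
      intro y hy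
      have := congrFun hx ⟨y, hy⟩
      simpa [E, LinearMap.mem_ker] using this
    funext j
    have hj : Pi.single j (1 : ℚ) ∈ LinearMap.ker (WAaux.dotL x) := by
      apply hker; rw [hTspan]; trivial
    simpa [WAaux.dotL, dotProduct, Pi.single_apply] using hj
  -- integer coordinates of L under E, lattice embedding
  let cast1 : ({y // y ∈ T} → ℤ) →ₗ[ℤ] ({y // y ∈ T} → ℚ) :=
    LinearMap.pi fun t => (Algebra.linearMap ℤ ℚ).comp (LinearMap.proj t)
  have hcastinj : Function.Injective cast1 := by
    intro z z' h
    funext t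
    have := congrFun h t
    simpa [cast1, algebraMap_int_eq] using this
  have hmemIntPi : ∀ xL : L, E (xL : Fin m → ℚ) ∈ LinearMap.range cast1 := by
    rintro ⟨x, hx⟩
    have hall : ∀ t : {y // y ∈ T}, ∃ z : ℤ, E x t = (z : ℚ) := by
      rintro ⟨y, hy⟩
      obtain ⟨u, hu⟩ := hTsub hy
      have : E x ⟨y, hy⟩ = x ⬝ᵥ y := rfl
      rw [this, ← hu]
      exact hdot x hx u
    choose zf hzf using hall
    refine ⟨zf, ?_⟩
    funext t
    simp [cast1, algebraMap_int_eq]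
    exact (hzf t).symm
  let G : L →ₗ[ℤ] LinearMap.range cast1 :=
    LinearMap.codRestrict _ (E.comp (L.subtype)) hmemIntPi
  let eC : ({y // y ∈ T} → ℤ) ≃ₗ[ℤ] LinearMap.range cast1 :=
    LinearEquiv.ofInjective cast1 hcastinj
  let G2 : L →ₗ[ℤ] ({y // y ∈ T} → ℤ) := (eC.symm : _ →ₗ[ℤ] _).comp G
  have hG2inj : Function.Injective G2 := by
    intro a b hab
    have h1 : G a = G b := by
      have := congrArg eC hab
      simpa [G2] using this
    have h2 : E (a : Fin m → ℚ) = E (b : Fin m → ℚ) := congrArg Subtype.val h1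
    have h3 : E ((a : Fin m → ℚ) - (b : Fin m → ℚ)) = 0 := by
      rw [map_sub, h2, sub_self]
    have h4 := hEinj _ h3
    exact Subtype.ext (by rwa [sub_eq_zero] at h4)
  obtain ⟨r, bR⟩ := Submodule.basisOfPid (Pi.basisFun ℤ {y // y ∈ T}) (LinearMap.range G2)
  let eL : L ≃ₗ[ℤ] LinearMap.range G2 := LinearEquiv.ofInjective G2 hG2inj
  let bL : Module.Basis (Fin r) ℤ L := bR.map eL.symm
  -- the integer automaton in the basis bL
  let b : Fin r → (Fin m → ℚ) := fun i => ((bL i : L) : Fin m → ℚ)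
  let B : Matrix (Fin r) (Fin m) ℚ := Matrix.of fun i j => b i j
  let a : Fin r → ℤ := fun i => bL.repr ⟨α₀, hαL⟩ i
  let cZ : S → Matrix (Fin r) (Fin r) ℤ := fun σ => Matrix.of fun i j =>
    bL.repr ⟨b i ᵥ* μ₀ σ, hLinv σ _ (bL i).2⟩ j
  let bβ : Fin r → ℤ := fun i => Classical.choose (hdotβ (b i) (bL i).2)
  have hB : ∀ σ, B * μ₀ σ = ((cZ σ).map (fun z : ℤ => (z : ℚ))) * B := by
    intro σ
    ext i j
    have h1 : (B * μ₀ σ) i j = (b i ᵥ* μ₀ σ) j := by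
      simp [Matrix.mul_apply, Matrix.vecMul, dotProduct, B]
    have h2 := congrArg (fun x : L => (x : Fin m → ℚ) j)
      (bL.sum_repr ⟨b i ᵥ* μ₀ σ, hLinv σ _ (bL i).2⟩)
    simp only at h2
    rw [WAaux.coordsum_Z] at h2
    rw [h1, ← h2]
    simp [Matrix.mul_apply, cZ, B, b]
  have ha : (fun i => (a i : ℚ)) ᵥ* B = α₀ := by
    ext j
    have h2 := congrArg (fun x : L => (x : Fin m → ℚ) j) (bL.sum_repr ⟨α₀, hαL⟩)
    simp only at h2
    rw [WAaux.coordsum_Z] at h2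
    rw [← h2]
    simp [Matrix.vecMul, dotProduct, B, a, b]
  have hBβ : B *ᵥ β₀ = fun i => ((bβ i : ℤ) : ℚ) := by
    funext i
    have h1 : (B *ᵥ β₀) i = b i ⬝ᵥ β₀ := by
      simp [Matrix.mulVec, dotProduct, B]
    rw [h1]
    exact Classical.choose_spec (hdotβ (b i) (bL i).2)
  refine ⟨r, a, cZ, bβ, ?_, ?_⟩
  · intro w
    have hit := WAaux.intertwine α₀ μ₀ β₀ B (fun σ => (cZ σ).map (fun z : ℤ => (z : ℚ)))
      hB (fun i => (a i : ℚ)) ha w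
    rw [hBβ] at hit
    rw [hit, hf]
  · intro k α' μ' β' hcomp
    have h1 : m ≤ k := hmin k α' μ' β' hcomp
    have hbZ : LinearIndependent ℤ b := by
      have hli := bL.linearIndependent
      have := hli.map' (L.subtype) (Submodule.ker_subtype L)
      exact this
    have hbQ : LinearIndependent ℚ b := (LinearIndependent.iff_fractionRing ℤ ℚ).mp hbZ
    have h2 : r ≤ m := by
      have := hbQ.fintype_card_le_finrank
      simpa [Module.finrank_fin_fun] using this
    omega
end
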